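/- Let φ̃ : ℝ^n → (−∞,+∞] be a proper function, let σ̃ ∈ (0,1), and let z₀ ∈ ℝ^n and z₁ ∈ dom φ̃. Suppose there exists a pair (v₁, ε₁) ∈ ℝ^n × ℝ_+ such that v₁ ∈ ∂_{ε₁}(φ̃ + (1/2)‖·−z₀‖²)(z₁) and ‖v₁‖² + 2ε₁ ≤ σ̃²‖v₁ + z₀ − z₁‖². Then for every z ∈ ℝ^n and every s > 0, one has φ̃(z₁) + (1/2)[1 − σ̃²(1 + s⁻¹)]‖v₁ + z₀ − z₁‖² ≤ φ̃(z) + ((s+1)/2)‖z − z₀‖². -/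

import Mathlib

open RealInnerProductSpace

/-- The ε-subdifferential at `z` of a proper extended-real-valued function represented by
its effective domain `D` and its real values `ψ` on `D` (the function equals `+∞` off `D`). -/
def epsSubdiff {E : Type*} [NormedAddCommGroup E] [InnerProductSpace ℝ E]
    (D : Set E) (ψ : E → ℝ) (ε : ℝ) (z : E) : Set E :=
  {u | ∀ z' ∈ D, ψ z + ⟪u, z' - z⟫ - ε ≤ ψ z'}

/-- key inequality for an inexact proximal point step.  The proper function
`φ̃ : ℝⁿ → (−∞,∞]` is represented by its effective domain `D` (nonempty, by properness)
and its real values `φ` on `D`. -/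
theorem inexact_prox_inequality
    {E : Type*} [NormedAddCommGroup E] [InnerProductSpace ℝ E] [FiniteDimensional ℝ E]
    (D : Set E) (φ : E → ℝ) (hD : D.Nonempty)
    (σt : ℝ) (hσt0 : 0 < σt) (hσt1 : σt < 1)
    (z₀ : E) (z₁ : E) (hz₁ : z₁ ∈ D)
    (v₁ : E) (ε₁ : ℝ) (hε₁ : 0 ≤ ε₁)
    (hv : v₁ ∈ epsSubdiff D (fun u => φ u + (1 / 2) * ‖u - z₀‖ ^ 2) ε₁ z₁)
    (hineq : ‖v₁‖ ^ 2 + 2 * ε₁ ≤ σt ^ 2 * ‖v₁ + z₀ - z₁‖ ^ 2) :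
    ∀ z ∈ D, ∀ s : ℝ, 0 < s →
      φ z₁ + (1 / 2) * (1 - σt ^ 2 * (1 + s⁻¹)) * ‖v₁ + z₀ - z₁‖ ^ 2 ≤
        φ z + ((s + 1) / 2) * ‖z - z₀‖ ^ 2 := by
  intro z hz s hs
  have h1 : φ z₁ + (1 / 2) * ‖z₁ - z₀‖ ^ 2 + ⟪v₁, z - z₁⟫ - ε₁ ≤
      φ z + (1 / 2) * ‖z - z₀‖ ^ 2 := hv z hz
  -- abbreviations as real quantities
  have hW : ‖v₁ + z₀ - z₁‖ ^ 2
      = ‖v₁‖ ^ 2 - 2 * ⟪v₁, z₁ - z₀⟫ + ‖z₁ - z₀‖ ^ 2 := by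
    rw [show v₁ + z₀ - z₁ = v₁ - (z₁ - z₀) by abel]
    exact norm_sub_sq_real v₁ (z₁ - z₀)
  have hsplit : ⟪v₁, z - z₁⟫ = ⟪v₁, z - z₀⟫ - ⟪v₁, z₁ - z₀⟫ := by
    rw [show z - z₁ = (z - z₀) - (z₁ - z₀) by abel, inner_sub_right]
  have hY : 0 ≤ s ^ 2 * ‖z - z₀‖ ^ 2 + 2 * s * ⟪v₁, z - z₀⟫ + ‖v₁‖ ^ 2 := by
    have h0 : (0:ℝ) ≤ ‖s • (z - z₀) + v₁‖ ^ 2 := sq_nonneg _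
    rw [norm_add_sq_real, norm_smul, real_inner_smul_left, real_inner_comm] at h0
    simp only [Real.norm_eq_abs, mul_pow, sq_abs] at h0
    nlinarith [h0]
  -- the key inequality, multiplied by s
  have key : s * φ z₁ + (1 / 2) * (s - σt ^ 2 * (s + 1)) * ‖v₁ + z₀ - z₁‖ ^ 2 ≤
      s * φ z + s * ((s + 1) / 2) * ‖z - z₀‖ ^ 2 := by
    have h1s := mul_le_mul_of_nonneg_left h1 hs.le
    have h2s := mul_le_mul_of_nonneg_left hineq (by positivity : (0:ℝ) ≤ (s + 1) / 2)
    rw [hsplit] at h1s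
    nlinarith [h1s, h2s, hY, hε₁, hW]
  rw [← mul_le_mul_iff_of_pos_left hs]
  have hfrac : s * ((1 / 2) * (1 - σt ^ 2 * (1 + s⁻¹)) * ‖v₁ + z₀ - z₁‖ ^ 2)
      = (1 / 2) * (s - σt ^ 2 * (s + 1)) * ‖v₁ + z₀ - z₁‖ ^ 2 := by
    field_simp
  calc s * (φ z₁ + (1 / 2) * (1 - σt ^ 2 * (1 + s⁻¹)) * ‖v₁ + z₀ - z₁‖ ^ 2)
      = s * φ z₁ + (1 / 2) * (s - σt ^ 2 * (s + 1)) * ‖v₁ + z₀ - z₁‖ ^ 2 := by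
        rw [mul_add, hfrac]
    _ ≤ s * φ z + s * ((s + 1) / 2) * ‖z - z₀‖ ^ 2 := key
    _ = s * (φ z + (s + 1) / 2 * ‖z - z₀‖ ^ 2) := by ring
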